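/- Let λ : Fˣ → kˣ be a nontrivial group homomorphism, let n ≥ 1, let u₁, …, u_n ∈ Fˣ be pairwise distinct, and let a₁, …, a_n ∈ kˣ. Then the set of x ∈ Fˣ such that x + uᵢ ≠ 0 for all i and a₁λ(x+u₁) + a₂λ(x+u₂) + ⋯ + a_nλ(x+u_n) ≠ 0 is infinite. -/

import Mathlib

open Matrix MonoidAlgebra
open scoped Classical

noncomputable section

variable (p : ℕ) [Fact p.Prime]

abbrev Fbar : Type := AlgebraicClosure (ZMod p)
abbrev SL2 : Type := Matrix.SpecialLinearGroup (Fin 2) (Fbar p)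

def Tgrp : Subgroup (SL2 p) where
  carrier := {g | g.1 0 1 = 0 ∧ g.1 1 0 = 0}
  one_mem' := by simp
  mul_mem' := by
    rintro a b ⟨ha1, ha2⟩ ⟨hb1, hb2⟩
    constructor <;>
      simp [Matrix.mul_apply, Fin.sum_univ_succ, ha1, ha2, hb1, hb2]
  inv_mem' := by
    rintro a ⟨ha1, ha2⟩
    constructor <;>
      simp [Matrix.SpecialLinearGroup.coe_inv, Matrix.adjugate_fin_two, ha1, ha2]

def Ugrp : Subgroup (SL2 p) where
  carrier := {g | g.1 1 0 = 0 ∧ g.1 0 0 = 1 ∧ g.1 1 1 = 1}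
  one_mem' := by simp
  mul_mem' := by
    rintro a b ⟨ha1, ha2, ha3⟩ ⟨hb1, hb2, hb3⟩
    refine ⟨?_, ?_, ?_⟩ <;>
      simp [Matrix.mul_apply, Fin.sum_univ_succ, ha1, ha2, ha3, hb1, hb2, hb3]
  inv_mem' := by
    rintro a ⟨ha1, ha2, ha3⟩
    refine ⟨?_, ?_, ?_⟩ <;>
      simp [Matrix.SpecialLinearGroup.coe_inv, Matrix.adjugate_fin_two, ha1, ha2, ha3]

def Bgrp : Subgroup (SL2 p) where
  carrier := {g | g.1 1 0 = 0}
  one_mem' := by simp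
  mul_mem' := by
    intro a b ha hb
    simp only [Set.mem_setOf_eq] at *
    simp [Matrix.mul_apply, Fin.sum_univ_succ, ha, hb]
  inv_mem' := by
    intro a ha
    simp only [Set.mem_setOf_eq] at *
    simp [Matrix.SpecialLinearGroup.coe_inv, Matrix.adjugate_fin_two, ha]

def Ngrp : Subgroup (SL2 p) := Subgroup.normalizer (Tgrp p : Set (SL2 p))

def eps (x : Fbar p) : SL2 p :=
  ⟨!![1, x; 0, 1], by simp [Matrix.det_fin_two_of]⟩

def sdot : SL2 p :=
  ⟨!![0, 1; -1, 0], by simp [Matrix.det_fin_two_of]⟩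

lemma mem_Tgrp_iff {g : SL2 p} : g ∈ Tgrp p ↔ g.1 0 1 = 0 ∧ g.1 1 0 = 0 := Iff.rfl
lemma mem_Bgrp_iff {g : SL2 p} : g ∈ Bgrp p ↔ g.1 1 0 = 0 := Iff.rfl

/-- The projection `B → T` killing the unipotent radical `U`,
sending an upper triangular matrix to its diagonal part. -/
def diagHom : Bgrp p →* Tgrp p where
  toFun b :=
    ⟨⟨!![b.1.1 0 0, 0; 0, b.1.1 1 1], by
        have hd : b.1.1.det = 1 := b.1.2
        rw [Matrix.det_fin_two] at hd
        have h10 : b.1.1 1 0 = 0 := b.2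
        rw [h10, mul_zero, sub_zero] at hd
        simpa [Matrix.det_fin_two_of] using hd⟩,
     by constructor <;> simp⟩
  map_one' := by
    apply Subtype.ext
    apply Subtype.ext
    simp [Matrix.one_fin_two]
  map_mul' := by
    intro a b
    apply Subtype.ext
    apply Subtype.ext
    rw [Subgroup.coe_mul (Tgrp p), Matrix.SpecialLinearGroup.coe_mul]
    have ha : a.1.1 1 0 = 0 := a.2
    have hb : b.1.1 1 0 = 0 := b.2
    ext i j
    fin_cases i <;> fin_cases j <;>
      simp [Matrix.mul_apply, Fin.sum_univ_succ, ha, hb]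

/-- Conjugation by `ṡ` as an automorphism of `T`:  `t ↦ ṡ⁻¹ t ṡ`. -/
def sConj : Tgrp p →* Tgrp p where
  toFun t :=
    ⟨(sdot p)⁻¹ * (t : SL2 p) * sdot p, by
      have h1 : (t : SL2 p).1 0 1 = 0 := t.2.1
      have h2 : (t : SL2 p).1 1 0 = 0 := t.2.2
      constructor <;>
        simp only [Matrix.SpecialLinearGroup.coe_mul, Matrix.SpecialLinearGroup.coe_inv] <;>
        simp [sdot, Matrix.SpecialLinearGroup.coe_inv, Matrix.adjugate_fin_two,
          Matrix.mul_apply, Matrix.vecMul, dotProduct, Fin.sum_univ_succ, h1, h2]⟩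
  map_one' := by
    apply Subtype.ext
    simp
  map_mul' := by
    intro a b
    apply Subtype.ext
    simp only [Subgroup.coe_mul]
    group

variable (k : Type*) [Field k] [IsAlgClosed k] [CharZero k]

/-- The group algebra `kG`. -/
abbrev GA := MonoidAlgebra k (SL2 p)

/-- The submodule of relations defining `kG ⊗_{kH} k_χ`. -/
def indRel (H : Subgroup (SL2 p)) (χ : H → k) : Submodule (GA p k) (GA p k) :=
  Submodule.span (GA p k)
    {x | ∃ (g : SL2 p) (h : H),
      x = MonoidAlgebra.single (g * (h : SL2 p)) 1 - χ h • MonoidAlgebra.single g 1}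

/-- The induced module `kG ⊗_{kH} k_χ`, realized as a quotient of `kG`. -/
abbrev IndMod (H : Subgroup (SL2 p)) (χ : H → k) : Type _ := GA p k ⧸ indRel p k H χ

/-- The canonical image of `g ⊗ 1` in `kG ⊗_{kH} k_χ`. -/
def indMk (H : Subgroup (SL2 p)) (χ : H → k) (g : SL2 p) : IndMod p k H χ :=
  Submodule.Quotient.mk (MonoidAlgebra.single g 1)

/-- The character value function `B → k` attached to a character `θ` of `T`,
via the projection `B → T`. -/
def charB (θ : Tgrp p →* kˣ) : Bgrp p → k := fun b => θ (diagHom p b)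

/-- `M(θ) = kG ⊗_{kB} k_θ`. -/
abbrev Mθ (θ : Tgrp p →* kˣ) : Type _ := IndMod p k (Bgrp p) (charB p k θ)

/-- The trivial `kG`-module `k_tr`. -/
abbrev Ktriv : Type _ := (Representation.trivial k (G := SL2 p) (V := k)).asModule

/-- The permutation module `k[G/H]`. -/
abbrev PermMod (H : Subgroup (SL2 p)) : Type _ :=
  (Representation.ofMulAction k (SL2 p) (SL2 p ⧸ H)).asModule

/-- The augmentation (sum of coefficients) on `k[G/H]`. -/
def aug (H : Subgroup (SL2 p)) (ξ : PermMod p k H) : k :=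
  ((Representation.ofMulAction k (SL2 p) (SL2 p ⧸ H)).asModuleEquiv ξ).coeff.sum fun _ c => c


/-- Extension of a homomorphism `λ : Fˣ → kˣ` to `F`, by `0` at `0`. -/
def lamExt (lam : (Fbar p)ˣ →* kˣ) : Fbar p → k := fun y =>
  if h : y = 0 then 0 else (lam (Units.mk0 y h) : k)

lemma lamExt_zero (lam : (Fbar p)ˣ →* kˣ) : lamExt p k lam 0 = 0 := dif_pos rfl

lemma lamExt_ne (lam : (Fbar p)ˣ →* kˣ) {y : Fbar p} (h : y ≠ 0) :
    lamExt p k lam y = (lam (Units.mk0 y h) : k) := dif_neg h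

lemma lamExt_one (lam : (Fbar p)ˣ →* kˣ) : lamExt p k lam 1 = 1 := by
  rw [lamExt_ne p k lam one_ne_zero, Units.mk0_one, _root_.map_one, Units.val_one]

lemma lamExt_mul (lam : (Fbar p)ˣ →* kˣ) (x y : Fbar p) :
    lamExt p k lam (x * y) = lamExt p k lam x * lamExt p k lam y := by
  rcases eq_or_ne x 0 with hx | hx
  · simp [hx, lamExt_zero]
  rcases eq_or_ne y 0 with hy | hy
  · simp [hy, lamExt_zero]
  have hxy : x * y ≠ 0 := mul_ne_zero hx hy
  rw [lamExt_ne p k lam hxy, lamExt_ne p k lam hx, lamExt_ne p k lam hy]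
  have h : Units.mk0 (x * y) hxy = Units.mk0 x hx * Units.mk0 y hy := Units.ext rfl
  rw [h, _root_.map_mul, Units.val_mul]

lemma lamExt_mul_inv (lam : (Fbar p)ˣ →* kˣ) (x : Fbar p) {y : Fbar p} (hy : y ≠ 0) :
    lamExt p k lam x * lamExt p k lam⁻¹ y = lamExt p k lam (x / y) := by
  rcases eq_or_ne x 0 with hx | hx
  · simp [hx, lamExt_zero, zero_div]
  have hxy : x / y ≠ 0 := div_ne_zero hx hy
  rw [lamExt_ne p k lam hx, lamExt_ne p k lam⁻¹ hy, lamExt_ne p k lam hxy,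
    MonoidHom.inv_apply]
  have h : Units.mk0 (x / y) hxy = Units.mk0 x hx * (Units.mk0 y hy)⁻¹ := by
    apply Units.ext
    simp [div_eq_mul_inv]
  rw [h, _root_.map_mul, map_inv, Units.val_mul, Units.val_inv_eq_inv_val]

lemma sum_lamExt (lam : (Fbar p)ˣ →* kˣ) (E : IntermediateField (ZMod p) (Fbar p))
    (hfin : (E : Set (Fbar p)).Finite) {z : Fbar p} (hzE : z ∈ E) (hz0 : z ≠ 0)
    (hlz : (lam (Units.mk0 z hz0) : k) ≠ 1) :
    ∑ x ∈ hfin.toFinset, lamExt p k lam x = 0 := by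
  have key : ∑ x ∈ hfin.toFinset, lamExt p k lam x
      = ∑ x ∈ hfin.toFinset, lamExt p k lam (z * x) := by
    refine Finset.sum_nbij' (fun y => z⁻¹ * y) (fun x => z * x) ?_ ?_ ?_ ?_ ?_
    · intro a ha
      rw [Set.Finite.mem_toFinset] at *
      exact E.mul_mem (E.inv_mem hzE) ha
    · intro a ha
      rw [Set.Finite.mem_toFinset] at *
      exact E.mul_mem hzE ha
    · intro a _; field_simp
    · intro a _; field_simp
    · intro a _
      rw [mul_inv_cancel_left₀ hz0]
  have hz : ∑ x ∈ hfin.toFinset, lamExt p k lam (z * x)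
      = (lam (Units.mk0 z hz0) : k) * ∑ x ∈ hfin.toFinset, lamExt p k lam x := by
    rw [Finset.mul_sum]
    refine Finset.sum_congr rfl fun x _ => ?_
    rw [lamExt_mul, lamExt_ne p k lam hz0]
  have h2 : ((lam (Units.mk0 z hz0) : k) - 1) * ∑ x ∈ hfin.toFinset, lamExt p k lam x = 0 := by
    rw [sub_mul, one_mul, ← hz, ← key, sub_self]
  exact (mul_eq_zero.mp h2).resolve_left (sub_ne_zero.mpr hlz)

lemma key_sum (lam : (Fbar p)ˣ →* kˣ) (n : ℕ) (u : Fin n → (Fbar p)ˣ)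
    (hu : Function.Injective u) (a : Fin n → kˣ) (j : Fin n)
    (E : IntermediateField (ZMod p) (Fbar p)) (hfin : (E : Set (Fbar p)).Finite)
    (huE : ∀ i, ((u i : Fbar p)) ∈ E) {z : Fbar p} (hzE : z ∈ E) (hz0 : z ≠ 0)
    (hlz : (lam (Units.mk0 z hz0) : k) ≠ 1) :
    ∑ x ∈ hfin.toFinset,
        (∑ i, (a i : k) * lamExt p k lam (x + u i)) * lamExt p k lam⁻¹ (x + u j)
      = (a j : k) * hfin.toFinset.card - ∑ i, (a i : k) := by
  classical
  set Es := hfin.toFinset with hEs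
  have hmem : ∀ x : Fbar p, x ∈ Es ↔ x ∈ E := fun x => Set.Finite.mem_toFinset hfin
  have hcross : ∀ i : Fin n,
      ∑ x ∈ Es, lamExt p k lam (x + u i) * lamExt p k lam⁻¹ (x + u j)
        = if i = j then (Es.card : k) - 1 else -1 := by
    intro i
    by_cases hij : i = j
    · subst hij
      rw [if_pos rfl]
      have hterm : ∀ x ∈ Es, lamExt p k lam (x + u i) * lamExt p k lam⁻¹ (x + u i)
          = 1 - (if x = -(u i : Fbar p) then (1 : k) else 0) := by
        intro x _
        rcases eq_or_ne (x + (u i : Fbar p)) 0 with h0 | h0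
        · have hx : x = -(u i : Fbar p) := eq_neg_of_add_eq_zero_left h0
          rw [h0, lamExt_zero, zero_mul, if_pos hx, sub_self]
        · have hx : x ≠ -(u i : Fbar p) := by
            intro h; apply h0; rw [h]; ring
          rw [lamExt_ne p k lam h0, lamExt_ne p k lam⁻¹ h0, MonoidHom.inv_apply,
            if_neg hx, sub_zero, Units.val_inv_eq_inv_val]
          exact mul_inv_cancel₀ (Units.ne_zero _)
      rw [Finset.sum_congr rfl hterm, Finset.sum_sub_distrib, Finset.sum_const,
        Finset.sum_ite_eq' Es (-(u i : Fbar p)) (fun _ => (1 : k)),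
        if_pos ((hmem _).mpr (E.neg_mem (huE i)))]
      simp
    · rw [if_neg hij]
      have huij : (u i : Fbar p) ≠ (u j : Fbar p) := by
        intro h; exact hij (hu (Units.ext h))
      have hd : (u i : Fbar p) - (u j : Fbar p) ≠ 0 := sub_ne_zero.mpr huij
      have hzero : lamExt p k lam (-(u j : Fbar p) + u i)
          * lamExt p k lam⁻¹ (-(u j : Fbar p) + u j) = 0 := by
        rw [neg_add_cancel, lamExt_zero, mul_zero]
      rw [← Finset.sum_erase Es hzero]
      have hterm : ∀ x ∈ Es.erase (-(u j : Fbar p)),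
          lamExt p k lam (x + u i) * lamExt p k lam⁻¹ (x + u j)
            = lamExt p k lam ((x + u i) / (x + u j)) := by
        intro x hx
        have hxj : x + (u j : Fbar p) ≠ 0 := by
          intro h
          exact (Finset.mem_erase.mp hx).1 (eq_neg_of_add_eq_zero_left h)
        exact lamExt_mul_inv p k lam _ hxj
      rw [Finset.sum_congr rfl hterm]
      have hbij : ∑ x ∈ Es.erase (-(u j : Fbar p)), lamExt p k lam ((x + u i) / (x + u j))
          = ∑ y ∈ Es.erase 1, lamExt p k lam y := by
        refine Finset.sum_nbij' (fun x => (x + u i) / (x + u j))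
          (fun y => ((u i : Fbar p) - y * u j) / (y - 1)) ?_ ?_ ?_ ?_ ?_
        · intro x hx
          obtain ⟨hx1, hx2⟩ := Finset.mem_erase.mp hx
          have hxE : x ∈ E := (hmem x).mp hx2
          have hxj : x + (u j : Fbar p) ≠ 0 := fun h => hx1 (eq_neg_of_add_eq_zero_left h)
          refine Finset.mem_erase.mpr ⟨?_, (hmem _).mpr
            (E.div_mem (E.add_mem hxE (huE i)) (E.add_mem hxE (huE j)))⟩
          intro h
          rw [div_eq_one_iff_eq hxj] at h
          exact huij (add_left_cancel h)
        · intro y hy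
          obtain ⟨hy1, hy2⟩ := Finset.mem_erase.mp hy
          have hyE : y ∈ E := (hmem y).mp hy2
          have hy1' : y - 1 ≠ 0 := sub_ne_zero.mpr hy1
          refine Finset.mem_erase.mpr ⟨?_, (hmem _).mpr
            (E.div_mem (E.sub_mem (huE i) (E.mul_mem hyE (huE j)))
              (E.sub_mem hyE E.one_mem))⟩
          intro h
          rw [div_eq_iff hy1'] at h
          exact huij (by linear_combination h)
        · intro x hx
          obtain ⟨hx1, hx2⟩ := Finset.mem_erase.mp hx
          have hxj : x + (u j : Fbar p) ≠ 0 := fun h => hx1 (eq_neg_of_add_eq_zero_left h)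
          have hden : (x + (u i : Fbar p)) / (x + u j) - 1 ≠ 0 := by
            intro h
            rw [sub_eq_zero, div_eq_one_iff_eq hxj] at h
            exact huij (add_left_cancel h)
          rw [div_eq_iff hden]
          field_simp
          ring
        · intro y hy
          obtain ⟨hy1, hy2⟩ := Finset.mem_erase.mp hy
          have hy1' : y - 1 ≠ 0 := sub_ne_zero.mpr hy1
          have he : ((u i : Fbar p) - y * u j) / (y - 1) + u j
              = ((u i : Fbar p) - u j) / (y - 1) := by
            field_simp
            ring
          have hden : ((u i : Fbar p) - y * u j) / (y - 1) + u j ≠ 0 := by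
            rw [he]
            exact div_ne_zero hd hy1'
          rw [div_eq_iff hden]
          field_simp
          ring
        · intro x _; rfl
      rw [hbij, Finset.sum_erase_eq_sub ((hmem _).mpr E.one_mem),
        sum_lamExt p k lam E hfin hzE hz0 hlz, lamExt_one, zero_sub]
  calc ∑ x ∈ Es, (∑ i, (a i : k) * lamExt p k lam (x + u i)) * lamExt p k lam⁻¹ (x + u j)
      = ∑ x ∈ Es, ∑ i, (a i : k) * (lamExt p k lam (x + u i) * lamExt p k lam⁻¹ (x + u j)) := by
        refine Finset.sum_congr rfl fun x _ => ?_
        rw [Finset.sum_mul]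
        exact Finset.sum_congr rfl fun i _ => mul_assoc _ _ _
    _ = ∑ i, ∑ x ∈ Es, (a i : k) * (lamExt p k lam (x + u i) * lamExt p k lam⁻¹ (x + u j)) :=
        Finset.sum_comm
    _ = ∑ i, (a i : k) * ∑ x ∈ Es, lamExt p k lam (x + u i) * lamExt p k lam⁻¹ (x + u j) := by
        exact Finset.sum_congr rfl fun i _ => (Finset.mul_sum _ _ _).symm
    _ = ∑ i, (a i : k) * (if i = j then (Es.card : k) - 1 else -1) := by
        exact Finset.sum_congr rfl fun i _ => by rw [hcross i]
    _ = (a j : k) * ((Es.card : k) - 1) + ∑ i ∈ Finset.univ.erase j, (a i : k) * (-1) := by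
        rw [← Finset.add_sum_erase _ _ (Finset.mem_univ j), if_pos rfl]
        congr 1
        refine Finset.sum_congr rfl fun i hi => ?_
        rw [if_neg (Finset.mem_erase.mp hi).1]
    _ = (a j : k) * hfin.toFinset.card - ∑ i, (a i : k) := by
        rw [← Finset.sum_mul, Finset.sum_erase_eq_sub (Finset.mem_univ j)]
        ring

lemma adjoin_finite (s : Set (Fbar p)) (hs : s.Finite) :
    ((IntermediateField.adjoin (ZMod p) s :
        IntermediateField (ZMod p) (Fbar p)) : Set (Fbar p)).Finite := by
  have h1 : Finite ↥s := hs.to_subtype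
  have h2 : FiniteDimensional (ZMod p) (IntermediateField.adjoin (ZMod p) s) :=
    IntermediateField.finiteDimensional_adjoin fun x _ =>
      (Algebra.IsAlgebraic.isAlgebraic x).isIntegral
  have h3 : Finite (IntermediateField.adjoin (ZMod p) s) := Module.finite_of_finite (ZMod p)
  exact Set.toFinite _

/-- For a nontrivial homomorphism `λ : Fˣ → kˣ`, `n ≥ 1`, pairwise distinct `u₁, …, u_n ∈ Fˣ`
and `a₁, …, a_n ∈ kˣ`, there are infinitely many `x ∈ Fˣ` such that all `x + uᵢ ≠ 0` and
`a₁ λ(x+u₁) + ⋯ + a_n λ(x+u_n) ≠ 0`. -/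
theorem statement4 (lam : (Fbar p)ˣ →* kˣ) (hlam : lam ≠ 1) (n : ℕ) (hn : 1 ≤ n)
    (u : Fin n → (Fbar p)ˣ) (hu : Function.Injective u) (a : Fin n → kˣ) :
    {x : (Fbar p)ˣ |
      (∀ i, (x : Fbar p) + (u i : Fbar p) ≠ 0) ∧
      ∑ i, (a i : k) * lamExt p k lam ((x : Fbar p) + (u i : Fbar p)) ≠ 0}.Infinite := by
  classical
  by_contra hinf
  rw [Set.not_infinite] at hinf
  obtain ⟨ξ, hξ⟩ : ∃ ξ : (Fbar p)ˣ, lam ξ ≠ 1 := by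
    by_contra h
    push_neg at h
    exact hlam (MonoidHom.ext fun x => (h x).trans rfl)
  set S0 : Set (Fbar p)ˣ := {x : (Fbar p)ˣ |
      (∀ i, (x : Fbar p) + (u i : Fbar p) ≠ 0) ∧
      ∑ i, (a i : k) * lamExt p k lam ((x : Fbar p) + (u i : Fbar p)) ≠ 0} with hS0
  set B : Set (Fbar p) := (Units.val '' S0) ∪ (Set.range fun i : Fin n => -(u i : Fbar p)) ∪
      (Set.range fun i : Fin n => (u i : Fbar p)) ∪ {0, 1, (ξ : Fbar p)} with hB
  have hBfin : B.Finite := by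
    refine (((hinf.image _).union (Set.finite_range _)).union (Set.finite_range _)).union ?_
    exact (Set.finite_singleton _).insert _ |>.insert _
  set E : IntermediateField (ZMod p) (Fbar p) := IntermediateField.adjoin (ZMod p) B with hEdef
  have hfinE : ((E : Set (Fbar p))).Finite := adjoin_finite p B hBfin
  have hBE : B ⊆ E := IntermediateField.subset_adjoin _ _
  obtain ⟨w, hw⟩ : ∃ w, w ∉ (E : Set (Fbar p)) := by
    obtain ⟨w, hw⟩ := (hfinE.infinite_compl).nonempty
    exact ⟨w, hw⟩
  set E' : IntermediateField (ZMod p) (Fbar p) :=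
    IntermediateField.adjoin (ZMod p) (insert w B) with hE'def
  have hfinE' : ((E' : Set (Fbar p))).Finite := adjoin_finite p _ (hBfin.insert w)
  have hBE' : insert w B ⊆ E' := IntermediateField.subset_adjoin _ _
  have hle : E ≤ E' := IntermediateField.adjoin.mono _ _ _ (Set.subset_insert w B)
  set Es := hfinE.toFinset with hEs
  set Es' := hfinE'.toFinset with hEs'
  have hEsub : Es ⊆ Es' := by
    intro x hx
    rw [Set.Finite.mem_toFinset] at *
    exact hle hx
  have hwE' : w ∈ Es' := by
    rw [Set.Finite.mem_toFinset]
    exact hBE' (Set.mem_insert w B)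
  have hwE : w ∉ Es := by
    rw [Set.Finite.mem_toFinset]
    exact hw
  have hcard : Es.card < Es'.card :=
    Finset.card_lt_card ((Finset.ssubset_iff_of_subset hEsub).mpr ⟨w, hwE', hwE⟩)
  -- nontriviality witness
  have hz0 : (ξ : Fbar p) ≠ 0 := Units.ne_zero ξ
  have hξB : (ξ : Fbar p) ∈ B := by
    rw [hB]
    exact Or.inr (by simp)
  have hlz : (lam (Units.mk0 (ξ : Fbar p) hz0) : k) ≠ 1 := by
    have hmk : Units.mk0 (ξ : Fbar p) hz0 = ξ := Units.ext rfl
    rw [hmk]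
    intro h
    exact hξ (Units.ext (by rw [h, Units.val_one]))
  have huB : ∀ i, ((u i : Fbar p)) ∈ B := by
    intro i
    rw [hB]
    exact Or.inl (Or.inr ⟨i, rfl⟩)
  have hnuB : ∀ i, (-(u i : Fbar p)) ∈ B := by
    intro i
    rw [hB]
    exact Or.inl (Or.inl (Or.inr ⟨i, rfl⟩))
  have h0B : (0 : Fbar p) ∈ B := by
    rw [hB]
    exact Or.inr (by simp)
  set j0 : Fin n := ⟨0, hn⟩ with hj0
  have key1 := key_sum p k lam n u hu a j0 E hfinE (fun i => hBE (huB i)) (hBE hξB) hz0 hlz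
  have key2 := key_sum p k lam n u hu a j0 E' hfinE' (fun i => hle (hBE (huB i)))
    (hle (hBE hξB)) hz0 hlz
  have hLHS : ∑ x ∈ Es',
        (∑ i, (a i : k) * lamExt p k lam (x + u i)) * lamExt p k lam⁻¹ (x + u j0)
      = ∑ x ∈ Es,
        (∑ i, (a i : k) * lamExt p k lam (x + u i)) * lamExt p k lam⁻¹ (x + u j0) := by
    refine (Finset.sum_subset hEsub ?_).symm
    intro x hx hxn
    have hxE : x ∉ (E : Set (Fbar p)) := by
      rw [Set.Finite.mem_toFinset] at hxn
      exact hxn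
    have hx0 : x ≠ 0 := fun h => hxE (hBE (h ▸ h0B))
    have hcond : ∀ i, x + (u i : Fbar p) ≠ 0 := by
      intro i h
      exact hxE (hBE ((eq_neg_of_add_eq_zero_left h) ▸ hnuB i))
    have hxu : Units.mk0 x hx0 ∉ S0 := by
      intro hmem
      exact hxE (hBE (Or.inl (Or.inl (Or.inl ⟨Units.mk0 x hx0, hmem, rfl⟩))))
    have hfx : ∑ i, (a i : k) * lamExt p k lam (x + u i) = 0 := by
      by_contra hne
      exact hxu ⟨hcond, hne⟩
    rw [hfx, zero_mul]
  have heq : (a j0 : k) * Es'.card - ∑ i, (a i : k)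
      = (a j0 : k) * Es.card - ∑ i, (a i : k) := by
    rw [← key2, ← key1, hLHS]
  have heq2 : (Es'.card : k) = (Es.card : k) :=
    mul_left_cancel₀ (Units.ne_zero (a j0)) (sub_left_inj.mp heq)
  have : Es'.card = Es.card := Nat.cast_injective heq2
  omega


end
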